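/- If T is a recursive tree decomposition of a graph with sources Γ = (G,X), then there exists a tree decomposition (Y,t) of G such that X is contained in the root bag of (Y,t) and the width of (Y,t) equals the width of T. -/

import Mathlib

open CategoryTheory MonoidalCategory

namespace MWidth

section


variable {V E : Type}

/-- every edge has one or two endpoints -/
def EndsSmall (ends : E → Set V) : Prop := ∀ e, ∃ u w : V, ends e = {u, w}

/-! ### Tree decompositions (Robertson–Seymour style) -/

structure TreeDec (ends : E → Set V) (ι : Type) where
  Y : SimpleGraph ι
  conn : Y.Connected
  acyc : Y.IsAcyclic
  t : ι → Set V
  cover : ∀ v : V, ∃ i, v ∈ t i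
  edge : ∀ e : E, ∃ i, ends e ⊆ t i
  sep : ∀ ⦃i j k : ι⦄ (p : Y.Walk i k), p.IsPath → j ∈ p.support → t i ∩ t k ⊆ t j

noncomputable def TreeDec.width {ends : E → Set V} {ι : Type} (D : TreeDec ends ι) : ℕ :=
  ⨆ i, (D.t i).ncard

/-! ### Recursive tree decompositions -/

inductive RTree (V : Type) where
  | nil : RTree V
  | node : RTree V → Set V → RTree V → RTree V

namespace RTree

noncomputable def width : RTree V → ℕ
  | nil => 0
  | node T1 W T2 => max W.ncard (max T1.width T2.width)

def label : RTree V → Set V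
  | nil => ∅
  | node _ W _ => W

inductive Subtree : RTree V → RTree V → Prop
  | refl (T : RTree V) : Subtree T T
  | left {T' T1 T2 : RTree V} {W : Set V} : Subtree T' T1 → Subtree T' (node T1 W T2)
  | right {T' T1 T2 : RTree V} {W : Set V} : Subtree T' T2 → Subtree T' (node T1 W T2)

end RTree

/-- `IsRTD ends vs es X T` : `T` is a recursive tree decomposition of the graph with
sources `((vs,es),X)` living inside the ambient graph `(V,E,ends)`. -/
def IsRTD (ends : E → Set V) : Set V → Set E → Set V → RTree V → Prop
  | vs, es, _, .nil => vs = ∅ ∧ es = ∅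
  | vs, es, X, .node T1 W T2 =>
      W.Nonempty ∧ W ⊆ vs ∧ X ⊆ W ∧
      ∃ (vs1 vs2 : Set V) (es1 es2 : Set E),
        vs1 ⊆ vs ∧ vs2 ⊆ vs ∧ es1 ⊆ es ∧ es2 ⊆ es ∧
        (∀ e ∈ es1, ends e ⊆ vs1) ∧ (∀ e ∈ es2, ends e ⊆ vs2) ∧
        W ∪ vs1 ∪ vs2 = vs ∧ es1 ∩ es2 = ∅ ∧ vs1 ∩ vs2 ⊆ W ∧
        (∀ e ∈ es \ (es1 ∪ es2), ends e ⊆ W) ∧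
        IsRTD ends vs1 es1 (vs1 ∩ W) T1 ∧ IsRTD ends vs2 es2 (vs2 ∩ W) T2

/-! ### Path decompositions -/

def IsPathDec (ends : E → Set V) (L : List (Set V)) : Prop :=
  (∀ v : V, ∃ W ∈ L, v ∈ W) ∧ (∀ e : E, ∃ W ∈ L, ends e ⊆ W) ∧
    ∀ i j k : ℕ, i ≤ j → j ≤ k → k < L.length →
      L.getD i ∅ ∩ L.getD k ∅ ⊆ L.getD j ∅

/-- width of a list of bags (used both for path decompositions and recursive
path decompositions) -/
noncomputable def pdWidth : List (Set V) → ℕ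
  | [] => 0
  | W :: L => max W.ncard (pdWidth L)

/-- `IsRPD ends vs es X L` : `L` is a recursive path decomposition of `((vs,es),X)`. -/
def IsRPD (ends : E → Set V) : Set V → Set E → Set V → List (Set V) → Prop
  | vs, es, _, [] => vs = ∅ ∧ es = ∅
  | vs, es, X, V1 :: L =>
      V1.Nonempty ∧ V1 ⊆ vs ∧ X ⊆ V1 ∧
      ∃ (vs' : Set V) (es' : Set E),
        vs' ⊆ vs ∧ es' ⊆ es ∧ (∀ e ∈ es', ends e ⊆ vs') ∧
        V1 ∪ vs' = vs ∧ (∀ e ∈ es \ es', ends e ⊆ V1) ∧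
        IsRPD ends vs' es' (V1 ∩ vs') L

/-! ### Branch decompositions -/

/-- binary trees whose nodes are labelled by subgraphs-with-sources `(vs,es,X)` -/
inductive BT (V E : Type) where
  | nil : BT V E
  | leaf : Set V → Set E → Set V → BT V E
  | node : BT V E → Set V → Set E → Set V → BT V E → BT V E

namespace BT

noncomputable def width : BT V E → ℕ
  | nil => 0
  | leaf _ _ X => X.ncard
  | node T1 _ _ X T2 => max X.ncard (max T1.width T2.width)

def labelV : BT V E → Set V
  | nil => ∅
  | leaf vs _ _ => vs
  | node _ vs _ _ _ => vs

def labelX : BT V E → Set V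
  | nil => ∅
  | leaf _ _ X => X
  | node _ _ _ X _ => X

inductive Subtree : BT V E → BT V E → Prop
  | refl (T : BT V E) : Subtree T T
  | left {T' T1 T2 : BT V E} {vs X : Set V} {es : Set E} :
      Subtree T' T1 → Subtree T' (node T1 vs es X T2)
  | right {T' T1 T2 : BT V E} {vs X : Set V} {es : Set E} :
      Subtree T' T2 → Subtree T' (node T1 vs es X T2)

end BT

/-- `IsRBD ends vs es X T` : `T` is a recursive branch decomposition of `((vs,es),X)`. -/
def IsRBD (ends : E → Set V) : Set V → Set E → Set V → BT V E → Prop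
  | _, es, _, .nil => es = ∅
  | vs, es, X, .leaf vs' es' X' => vs' = vs ∧ es' = es ∧ X' = X ∧ ∃ e, es = {e}
  | vs, es, X, .node T1 vs' es' X' T2 =>
      vs' = vs ∧ es' = es ∧ X' = X ∧
      ∃ (vs1 vs2 : Set V) (es1 es2 : Set E),
        vs1 ⊆ vs ∧ vs2 ⊆ vs ∧
        (∀ e ∈ es1, ends e ⊆ vs1) ∧ (∀ e ∈ es2, ends e ⊆ vs2) ∧
        es1 ∪ es2 = es ∧ es1 ∩ es2 = ∅ ∧ vs1 ∪ vs2 = vs ∧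
        IsRBD ends vs1 es1 ((vs1 ∩ vs2) ∪ (X ∩ vs1)) T1 ∧
        IsRBD ends vs2 es2 ((vs1 ∩ vs2) ∪ (X ∩ vs2)) T2

/-- branch decompositions: subcubic trees with leaves in bijection with the edges -/
structure BranchDec (E ι : Type) where
  Y : SimpleGraph ι
  conn : Y.Connected
  acyc : Y.IsAcyclic
  subcubic : ∀ i : ι, (Y.neighborSet i).ncard ≤ 3
  b : {i : ι // (Y.neighborSet i).ncard = 1} ≃ E

/-- the edges of `G` on the `u`-side of the edge `{u,w}` of the decomposition tree -/
def BranchDec.side {E ι : Type} (D : BranchDec E ι) (u w : ι) : Set E :=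
  { e | ∃ l : {i : ι // (D.Y.neighborSet i).ncard = 1},
      (D.Y.deleteEdges {s(u, w)}).Reachable u l.1 ∧ D.b l = e }

def edgeEnds (ends : E → Set V) (A : Set E) : Set V := ⋃ e ∈ A, ends e

noncomputable def BranchDec.order (ends : E → Set V) {ι : Type} (D : BranchDec E ι)
    (u w : ι) : ℕ :=
  (edgeEnds ends (D.side u w) ∩ edgeEnds ends (D.side w u)).ncard

noncomputable def BranchDec.bwidth (ends : E → Set V) {ι : Type} (D : BranchDec E ι) : ℕ :=
  ⨆ p : {p : ι × ι // D.Y.Adj p.1 p.2}, D.order ends p.1.1 p.1.2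

/-! ### min-max widths -/

noncomputable def treewidth (ends : E → Set V) : ℕ :=
  sInf { n | ∃ (ι : Type) (_ : Finite ι) (D : TreeDec ends ι), D.width = n }

noncomputable def pathwidth (ends : E → Set V) : ℕ :=
  sInf { n | ∃ L : List (Set V), IsPathDec ends L ∧ pdWidth L = n }

noncomputable def branchwidth (ends : E → Set V) : ℕ :=
  sInf { n | ∃ (ι : Type) (_ : Fintype ι) (D : BranchDec E ι), D.bwidth ends = n }


namespace RTree

def subAt (T : RTree V) : List Bool → RTree V
  | [] => T
  | b :: p =>
    match T with
    | nil => nil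
    | node T1 _ T2 => subAt (if b then T2 else T1) p

@[simp] lemma subAt_nilT (p : List Bool) : subAt (nil : RTree V) p = nil := by
  cases p <;> rfl

@[simp] lemma subAt_nil (T : RTree V) : subAt T [] = T := rfl

@[simp] lemma subAt_cons (T1 T2 : RTree V) (W : Set V) (b : Bool) (p : List Bool) :
    subAt (node T1 W T2) (b :: p) = subAt (if b then T2 else T1) p := rfl

lemma subAt_append (T : RTree V) (p q : List Bool) :
    subAt T (p ++ q) = subAt (subAt T p) q := by
  induction p generalizing T with
  | nil => rfl
  | cons b p ih =>
    cases T with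
    | nil => simp
    | node T1 W T2 => simp [ih]

lemma subAt_ne_nil_of_prefix {T : RTree V} {p q : List Bool} (h : subAt T p ≠ nil)
    (hq : q <+: p) : subAt T q ≠ nil := by
  obtain ⟨s, rfl⟩ := hq
  rw [subAt_append] at h
  intro hc
  rw [hc] at h
  simp at h

def depth : RTree V → ℕ
  | nil => 0
  | node T1 _ T2 => max (depth T1) (depth T2) + 1

lemma length_le_depth {T : RTree V} {p : List Bool} (h : subAt T p ≠ nil) :
    p.length ≤ depth T := by
  induction p generalizing T with
  | nil =>
    cases T with
    | nil => simp at h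
    | node T1 W T2 => simp [depth]
  | cons b p ih =>
    cases T with
    | nil => simp at h
    | node T1 W T2 =>
      simp only [subAt_cons] at h
      have := ih h
      simp only [depth, List.length_cons]
      cases b <;> simp_all

/-- valid addresses in the tree -/
def Addr (T : RTree V) : Type := {p : List Bool // T.subAt p ≠ nil}

instance {T : RTree V} : Finite (Addr T) := by
  haveI : Finite {l : List Bool | l.length ≤ depth T} :=
    (List.finite_length_le Bool (depth T)).to_subtype
  exact Finite.of_injective
    (fun i : Addr T => (⟨i.1, length_le_depth i.2⟩ : {l : List Bool | l.length ≤ depth T}))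
    (fun a b h => Subtype.ext (congrArg (Subtype.val : {l : List Bool | l.length ≤ depth T} → List Bool) h))

/-- the tree graph on addresses: parent/child adjacency -/
def agraph (T : RTree V) : SimpleGraph (Addr T) where
  Adj i j := (i.1 ≠ [] ∧ i.1.dropLast = j.1) ∨ (j.1 ≠ [] ∧ j.1.dropLast = i.1)
  symm := ⟨by intro i j h; tauto⟩
  loopless := ⟨by
    intro i h
    rcases h with ⟨h1, h2⟩ | ⟨h1, h2⟩ <;>
    · have := @List.length_dropLast _ i.1
      rw [h2] at this
      have : 0 < i.1.length := List.length_pos_iff.mpr h1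
      omega⟩

lemma dropLast_valid {T : RTree V} (i : Addr T) : T.subAt i.1.dropLast ≠ nil :=
  subAt_ne_nil_of_prefix i.2 (List.dropLast_prefix _)

lemma strict_prefix_dropLast {q l : List Bool} (h : q <+: l) (hne : q ≠ l) :
    q <+: l.dropLast := by
  rw [List.dropLast_eq_take, List.prefix_take_iff]
  refine ⟨h, ?_⟩
  have h1 := h.length_le
  have h2 : q.length ≠ l.length := fun hl => hne (List.IsPrefix.eq_of_length h hl)
  omega

lemma reach_root {T : RTree V} (hT : T ≠ nil) :
    ∀ n (i : Addr T), i.1.length ≤ n → (agraph T).Reachable i ⟨[], by simpa using hT⟩ := by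
  intro n
  induction n with
  | zero =>
    intro i hi
    have : i = ⟨[], by simpa using hT⟩ := Subtype.ext (List.eq_nil_of_length_eq_zero (Nat.le_zero.mp hi))
    rw [this]
    exact SimpleGraph.Reachable.refl _
  | succ n ih =>
    intro i hi
    by_cases he : i.1 = []
    · rw [show i = ⟨[], by simpa using hT⟩ from Subtype.ext he]
      exact SimpleGraph.Reachable.refl _
    · have hadj : (agraph T).Adj i ⟨i.1.dropLast, dropLast_valid i⟩ := Or.inl ⟨he, rfl⟩
      have hlen : i.1.dropLast.length ≤ n := by
        have := @List.length_dropLast _ i.1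
        have : 0 < i.1.length := List.length_pos_iff.mpr he
        simp [List.length_dropLast]; omega
      exact hadj.reachable.trans (ih _ hlen)

lemma agraph_connected {T : RTree V} (hT : T ≠ nil) : (agraph T).Connected := by
  haveI : Nonempty (Addr T) := ⟨⟨[], by simpa using hT⟩⟩
  refine ⟨fun i j => ?_⟩
  exact (reach_root hT i.1.length i le_rfl).trans (reach_root hT j.1.length j le_rfl).symm

lemma agraph_acyclic (T : RTree V) : (agraph T).IsAcyclic := by
  rw [SimpleGraph.isAcyclic_iff_forall_adj_isBridge]
  have key : ∀ (i j : Addr T), i.1 ≠ [] → i.1.dropLast = j.1 →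
      ¬((agraph T) \ SimpleGraph.fromEdgeSet {s(i, j)}).Reachable i j := by
    intro i j hne hdl hreach
    -- S = addresses extending i
    set S : Addr T → Prop := fun m => i.1 <+: m.1 with hS
    have hpres : ∀ a b : Addr T,
        ((agraph T) \ SimpleGraph.fromEdgeSet {s(i, j)}).Adj a b → S a → S b := by
      intro a b hab ha
      obtain ⟨hadj, hnot⟩ := hab
      have hadj' := hadj
      simp only [SimpleGraph.fromEdgeSet_adj, Set.mem_singleton_iff, not_and, not_not] at hnot
      rcases hadj with ⟨h1, h2⟩ | ⟨h1, h2⟩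
      · -- b = parent a
        by_cases heq : i.1 = a.1
        · -- a = i, so b = j: the deleted edge
          have ha_eq : a = i := Subtype.ext heq.symm
          have hb_eq : b = j := Subtype.ext (by rw [← h2, ha_eq, hdl])
          exfalso
          have hab2 : a = b := hnot (by rw [ha_eq, hb_eq])
          have hij : i = j := by rw [← ha_eq, ← hb_eq, hab2]
          rw [← hij] at hb_eq
          rw [ha_eq, hb_eq] at hadj'
          exact (agraph T).loopless.irrefl i hadj'
        · have := strict_prefix_dropLast ha heq
          rwa [h2] at this
      · -- a = parent b
        exact ha.trans (h2 ▸ List.dropLast_prefix b.1)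
    obtain ⟨w⟩ := hreach
    have hwalk : ∀ {a b : Addr T}
        (w : ((agraph T) \ SimpleGraph.fromEdgeSet {s(i, j)}).Walk a b), S a → S b := by
      intro a b w
      induction w with
      | nil => exact id
      | cons h p ih => exact fun ha => ih (hpres _ _ h ha)
    have hSj : S j := hwalk w (List.prefix_refl _)
    have : i.1 <+: i.1.dropLast := hdl ▸ hSj
    have h1 := this.length_le
    have h2 := @List.length_dropLast _ i.1
    have h3 : 0 < i.1.length := List.length_pos_iff.mpr hne
    omega
  intro i j hadj
  rw [SimpleGraph.isBridge_iff]
  rcases hadj with ⟨h1, h2⟩ | ⟨h1, h2⟩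
  · exact key i j h1 h2
  · intro hreach
    exact key j i h1 h2 (by rw [show s(j, i) = s(i, j) from Sym2.eq_swap]; exact hreach.symm)

lemma walkTo {T : RTree V} :
    ∀ n (i j : Addr T), j.1 <+: i.1 → i.1.length ≤ n →
      ∃ w : (agraph T).Walk i j, ∀ m ∈ w.support, j.1 <+: m.1 ∧ m.1 <+: i.1 := by
  intro n
  induction n with
  | zero =>
    intro i j hpre hlen
    have hi : i.1 = [] := List.eq_nil_of_length_eq_zero (Nat.le_zero.mp hlen)
    have hj : j = i := Subtype.ext (by simpa [hi] using hpre)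
    subst hj
    exact ⟨SimpleGraph.Walk.nil, by simp⟩
  | succ n ih =>
    intro i j hpre hlen
    by_cases heq : j = i
    · subst heq; exact ⟨SimpleGraph.Walk.nil, by simp⟩
    · have hne : j.1 ≠ i.1 := fun h => heq (Subtype.ext h)
      have hine : i.1 ≠ [] := by
        intro h
        exact hne (by simpa [h] using hpre)
      set par : Addr T := ⟨i.1.dropLast, dropLast_valid i⟩ with hpar
      have hpre' : j.1 <+: par.1 := strict_prefix_dropLast hpre hne
      have hlen' : par.1.length ≤ n := by
        have := @List.length_dropLast _ i.1
        have : 0 < i.1.length := List.length_pos_iff.mpr hine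
        simp [hpar, List.length_dropLast]; omega
      obtain ⟨w, hw⟩ := ih par j hpre' hlen'
      refine ⟨SimpleGraph.Walk.cons (Or.inl ⟨hine, rfl⟩) w, ?_⟩
      intro m hm
      replace hm : m ∈ i :: w.support := hm
      rcases List.mem_cons.mp hm with hm | hm
      · subst hm; exact ⟨hpre, List.prefix_refl _⟩
      · obtain ⟨hm1, hm2⟩ := hw m hm
        exact ⟨hm1, hm2.trans (List.dropLast_prefix _)⟩

lemma lcp_spec : ∀ x y : List Bool, ∃ r, r <+: x ∧ r <+: y ∧
    (x = r ∨ y = r ∨ ∃ a b x' y', a ≠ b ∧ x = r ++ a :: x' ∧ y = r ++ b :: y') := by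
  intro x
  induction x with
  | nil => intro y; exact ⟨[], List.nil_prefix, List.nil_prefix, Or.inl rfl⟩
  | cons a x0 ih =>
    intro y
    cases y with
    | nil => exact ⟨[], List.nil_prefix, List.nil_prefix, Or.inr (Or.inl rfl)⟩
    | cons b y0 =>
      by_cases hab : a = b
      · subst hab
        obtain ⟨r0, hr1, hr2, hr3⟩ := ih y0
        refine ⟨a :: r0, List.cons_prefix_cons.mpr ⟨rfl, hr1⟩,
          List.cons_prefix_cons.mpr ⟨rfl, hr2⟩, ?_⟩
        rcases hr3 with h | h | ⟨c, d, x', y', hcd, hx, hy⟩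
        · exact Or.inl (by rw [← h])
        · exact Or.inr (Or.inl (by rw [← h]))
        · exact Or.inr (Or.inr ⟨c, d, x', y', hcd, by rw [hx]; rfl, by rw [hy]; rfl⟩)
      · exact ⟨[], List.nil_prefix, List.nil_prefix,
          Or.inr (Or.inr ⟨a, b, x0, y0, hab, rfl, rfl⟩)⟩

end RTree

section RTDlemmas

open RTree

variable {ends : E → Set V}

lemma rtd_label_sub {vs es X} {T : RTree V} (h : IsRTD ends vs es X T) :
    T.label ⊆ vs := by
  cases T with
  | nil => simp [label]
  | node T1 W T2 => exact h.2.1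

lemma rtd_X_sub {vs es X} {T : RTree V} (h : IsRTD ends vs es X T) (hT : T ≠ nil) :
    X ⊆ T.label := by
  cases T with
  | nil => exact absurd rfl hT
  | node T1 W T2 => exact h.2.2.1

lemma rtd_subAt {p : List Bool} {vs es X} {T : RTree V} (h : IsRTD ends vs es X T)
    (hp : T.subAt p ≠ nil) :
    ∃ vs' es' X', vs' ⊆ vs ∧ IsRTD ends vs' es' X' (T.subAt p) := by
  induction p generalizing T vs es X with
  | nil => exact ⟨vs, es, X, le_refl _, h⟩
  | cons b p ih =>
    cases T with
    | nil => simp at hp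
    | node T1 W T2 =>
      obtain ⟨hW, hWvs, hXW, vs1, vs2, es1, es2, h1, h2, h3, h4, h5, h6, h7, h8, h9, h10,
        hT1, hT2⟩ := h
      rw [subAt_cons] at hp ⊢
      cases b with
      | false =>
        simp only [if_neg Bool.false_ne_true] at hp ⊢
        obtain ⟨vs', es', X', hsub, hrtd⟩ := ih hT1 hp
        exact ⟨vs', es', X', hsub.trans h1, hrtd⟩
      | true =>
        simp only [if_pos rfl] at hp ⊢
        obtain ⟨vs', es', X', hsub, hrtd⟩ := ih hT2 hp
        exact ⟨vs', es', X', hsub.trans h2, hrtd⟩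

lemma rtd_label_subAt_sub {p : List Bool} {vs es X} {T : RTree V}
    (h : IsRTD ends vs es X T) (hp : T.subAt p ≠ nil) : (T.subAt p).label ⊆ vs := by
  obtain ⟨vs', es', X', hsub, hrtd⟩ := rtd_subAt h hp
  exact (rtd_label_sub hrtd).trans hsub

lemma rtd_vert {v : V} {p : List Bool} {vs es X} {T : RTree V}
    (h : IsRTD ends vs es X T) (hp : T.subAt p ≠ nil)
    (hv : v ∈ (T.subAt p).label) (hroot : v ∈ T.label) :
    ∀ q, q <+: p → v ∈ (T.subAt q).label := by
  induction p generalizing T vs es X with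
  | nil =>
    intro q hq
    rw [List.prefix_nil.mp hq]
    exact hroot
  | cons b p ih =>
    cases T with
    | nil => simp at hp
    | node T1 W T2 =>
      obtain ⟨hW, hWvs, hXW, vs1, vs2, es1, es2, h1, h2, h3, h4, h5, h6, h7, h8, h9, h10,
        hT1, hT2⟩ := h
      rw [subAt_cons] at hp hv
      have key : ∀ q, q <+: p → v ∈ ((if b then T2 else T1).subAt q).label := by
        cases b with
        | false =>
          simp only [if_neg Bool.false_ne_true] at hp hv ⊢
          have hT1ne : T1 ≠ nil := fun hc => by simp [hc] at hp
          have hvs1 : v ∈ vs1 := rtd_label_subAt_sub hT1 hp hv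
          have hvlab : v ∈ T1.label := rtd_X_sub hT1 hT1ne ⟨hvs1, hroot⟩
          exact ih hT1 hp hv hvlab
        | true =>
          simp only [if_pos rfl] at hp hv ⊢
          have hT2ne : T2 ≠ nil := fun hc => by simp [hc] at hp
          have hvs2 : v ∈ vs2 := rtd_label_subAt_sub hT2 hp hv
          have hvlab : v ∈ T2.label := rtd_X_sub hT2 hT2ne ⟨hvs2, hroot⟩
          exact ih hT2 hp hv hvlab
      intro q hq
      cases q with
      | nil => exact hroot
      | cons c q' =>
        obtain ⟨hcb, hq'⟩ := List.cons_prefix_cons.mp hq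
        subst hcb
        rw [subAt_cons]
        exact key q' hq'

lemma rtd_meet {v : V} {p q : List Bool} {vs es X} {T1 T2 : RTree V} {W : Set V}
    (h : IsRTD ends vs es X (node T1 W T2))
    (hp : T1.subAt p ≠ nil) (hq : T2.subAt q ≠ nil)
    (hv1 : v ∈ (T1.subAt p).label) (hv2 : v ∈ (T2.subAt q).label) : v ∈ W := by
  obtain ⟨hW, hWvs, hXW, vs1, vs2, es1, es2, h1, h2, h3, h4, h5, h6, h7, h8, h9, h10,
    hT1, hT2⟩ := h
  exact h9 ⟨rtd_label_subAt_sub hT1 hp hv1, rtd_label_subAt_sub hT2 hq hv2⟩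

lemma rtd_cover {v : V} {vs es X} {T : RTree V} (h : IsRTD ends vs es X T)
    (hv : v ∈ vs) : ∃ p, T.subAt p ≠ nil ∧ v ∈ (T.subAt p).label := by
  induction T generalizing vs es X with
  | nil => rw [h.1] at hv; exact absurd hv (Set.notMem_empty v)
  | node T1 W T2 ih1 ih2 =>
    obtain ⟨hW, hWvs, hXW, vs1, vs2, es1, es2, h1, h2, h3, h4, h5, h6, h7, h8, h9, h10,
      hT1, hT2⟩ := h
    by_cases hvW : v ∈ W
    · exact ⟨[], by simp, hvW⟩
    · rw [← h7] at hv
      rcases hv with (hv | hv) | hv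
      · exact absurd hv hvW
      · obtain ⟨p, hp1, hp2⟩ := ih1 hT1 hv
        exact ⟨false :: p, by simpa using hp1, by simpa using hp2⟩
      · obtain ⟨p, hp1, hp2⟩ := ih2 hT2 hv
        exact ⟨true :: p, by simpa using hp1, by simpa using hp2⟩

lemma rtd_edge {e : E} {vs es X} {T : RTree V} (h : IsRTD ends vs es X T)
    (he : e ∈ es) : ∃ p, T.subAt p ≠ nil ∧ ends e ⊆ (T.subAt p).label := by
  induction T generalizing vs es X with
  | nil => rw [h.2] at he; exact absurd he (Set.notMem_empty e)
  | node T1 W T2 ih1 ih2 =>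
    obtain ⟨hW, hWvs, hXW, vs1, vs2, es1, es2, h1, h2, h3, h4, h5, h6, h7, h8, h9, h10,
      hT1, hT2⟩ := h
    by_cases he1 : e ∈ es1
    · obtain ⟨p, hp1, hp2⟩ := ih1 hT1 he1
      exact ⟨false :: p, by simpa using hp1, by simpa using hp2⟩
    · by_cases he2 : e ∈ es2
      · obtain ⟨p, hp1, hp2⟩ := ih2 hT2 he2
        exact ⟨true :: p, by simpa using hp1, by simpa using hp2⟩
      · refine ⟨[], by simp, ?_⟩
        exact h10 e ⟨he, by simp [he1, he2]⟩

lemma seg_mem {v : V} {vs es X} {T : RTree V} (hT : IsRTD ends vs es X T)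
    (i rv : Addr T) (hpre : rv.1 <+: i.1)
    (hvi : v ∈ (T.subAt i.1).label) (hvr : v ∈ (T.subAt rv.1).label) :
    ∀ m : Addr T, rv.1 <+: m.1 → m.1 <+: i.1 → v ∈ (T.subAt m.1).label := by
  obtain ⟨vs', es', X', _, hrtd⟩ := rtd_subAt hT rv.2
  obtain ⟨s, hs⟩ := hpre
  intro m hm1 hm2
  obtain ⟨q, hq⟩ := hm1
  have hqs : q <+: s := by
    rw [← hq, ← hs] at hm2
    exact (List.prefix_append_right_inj rv.1).mp hm2
  have hsub : T.subAt i.1 = (T.subAt rv.1).subAt s := by rw [← hs, subAt_append]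
  have hmsub : T.subAt m.1 = (T.subAt rv.1).subAt q := by rw [← hq, subAt_append]
  have hsne : (T.subAt rv.1).subAt s ≠ nil := hsub ▸ i.2
  rw [hmsub]
  exact rtd_vert hrtd hsne (hsub ▸ hvi) hvr q hqs

lemma width_le_iff {T : RTree V} {n : ℕ} :
    T.width ≤ n ↔ ∀ p, T.subAt p ≠ nil → ((T.subAt p).label).ncard ≤ n := by
  induction T with
  | nil =>
    simp only [width]
    constructor
    · intro _ p hp; simp at hp
    · intro _; omega
  | node T1 W T2 ih1 ih2 =>
    simp only [width, max_le_iff]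
    constructor
    · rintro ⟨hW, h1, h2⟩ p hp
      cases p with
      | nil => exact hW
      | cons b p' =>
        rw [subAt_cons] at hp ⊢
        cases b with
        | false => simpa using ih1.mp h1 p' (by simpa using hp)
        | true => simpa using ih2.mp h2 p' (by simpa using hp)
    · intro h
      refine ⟨h [] (by simp), ?_, ?_⟩
      · exact ih1.mpr fun p hp => by simpa using h (false :: p) (by simpa using hp)
      · exact ih2.mpr fun p hp => by simpa using h (true :: p) (by simpa using hp)

end RTDlemmas

end

/-- A recursive tree decomposition of `(G,X)` yields a tree decomposition
of `G` with `X` inside the root bag and the same width. -/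
theorem stmt1 {V E : Type} [Finite V] [Finite E]
    (ends : E → Set V) (hsmall : EndsSmall ends)
    (X : Set V) (T : RTree V) (hT : IsRTD ends Set.univ Set.univ X T) :
    ∃ (ι : Type) (_ : Finite ι) (D : TreeDec ends ι) (r : ι),
      X ⊆ D.t r ∧ D.width = T.width := by
  open RTree SimpleGraph in
  cases T with
  | nil =>
    haveI : IsEmpty V := Set.univ_eq_empty_iff.mp hT.1
    haveI : IsEmpty E := Set.univ_eq_empty_iff.mp hT.2
    refine ⟨PUnit, inferInstance,
      { Y := ⊥
        conn := ⟨fun u v => by rw [Subsingleton.elim u v]⟩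
        acyc := SimpleGraph.isAcyclic_bot
        t := fun _ => ∅
        cover := fun v => (IsEmpty.false v).elim
        edge := fun e => (IsEmpty.false e).elim
        sep := by intro i j k p hp hj; simp }, PUnit.unit, ?_, ?_⟩
    · intro v hv; exact (IsEmpty.false v).elim
    · simp [TreeDec.width, RTree.width]
  | node T1 W T2 =>
    set T : RTree V := RTree.node T1 W T2 with hTdef
    have hTne : T ≠ RTree.nil := by simp [hTdef]
    have hsepkey : ∀ (i k : Addr T) (v : V), v ∈ (T.subAt i.1).label →
        v ∈ (T.subAt k.1).label →
        ∃ w : (agraph T).Walk i k, ∀ m ∈ w.support, v ∈ (T.subAt m.1).label := by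
      intro i k v hvi hvk
      obtain ⟨r, hri, hrk, hcase⟩ := lcp_spec i.1 k.1
      have hrv : T.subAt r ≠ RTree.nil := subAt_ne_nil_of_prefix i.2 hri
      set rv : Addr T := ⟨r, hrv⟩ with hrvdef
      have hvr : v ∈ (T.subAt rv.1).label := by
        rcases hcase with hik | hki | ⟨a, b, x', y', hab, hxe, hye⟩
        · show v ∈ (T.subAt r).label; rw [← hik]; exact hvi
        · show v ∈ (T.subAt r).label; rw [← hki]; exact hvk
        · obtain ⟨vs', es', X', _, hrtd⟩ := rtd_subAt hT hrv
          cases hTT : T.subAt r with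
          | nil => exact absurd hTT hrv
          | node U1 WW U2 =>
            rw [hTT] at hrtd
            have hi2 : T.subAt i.1 = (if a then U2 else U1).subAt x' := by
              rw [hxe, subAt_append, hTT, subAt_cons]
            have hk2 : T.subAt k.1 = (if b then U2 else U1).subAt y' := by
              rw [hye, subAt_append, hTT, subAt_cons]
            have hvi' := hi2 ▸ hvi
            have hvk' := hk2 ▸ hvk
            have hine := hi2 ▸ i.2
            have hkne := hk2 ▸ k.2
            show v ∈ WW
            cases a with
            | false =>
              cases b with
              | false => exact absurd rfl hab
              | true =>
                simp only [if_neg Bool.false_ne_true, if_pos rfl] at hvi' hvk' hine hkne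
                exact rtd_meet hrtd hine hkne hvi' hvk'
            | true =>
              cases b with
              | false =>
                simp only [if_neg Bool.false_ne_true, if_pos rfl] at hvi' hvk' hine hkne
                exact rtd_meet hrtd hkne hine hvk' hvi'
              | true => exact absurd rfl hab
      obtain ⟨w1, hw1⟩ := walkTo i.1.length i rv hri le_rfl
      obtain ⟨w2, hw2⟩ := walkTo k.1.length k rv hrk le_rfl
      refine ⟨w1.append w2.reverse, ?_⟩
      intro m hm
      rw [SimpleGraph.Walk.support_append] at hm
      rcases List.mem_append.mp hm with hm | hm
      · obtain ⟨h1, h2⟩ := hw1 m hm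
        exact seg_mem hT i rv hri hvi hvr m h1 h2
      · have hm' : m ∈ w2.support := by
          have := List.mem_of_mem_tail hm
          rw [SimpleGraph.Walk.support_reverse] at this
          exact List.mem_reverse.mp this
        obtain ⟨h1, h2⟩ := hw2 m hm'
        exact seg_mem hT k rv hrk hvk hvr m h1 h2
    refine ⟨Addr T, inferInstance,
      { Y := agraph T
        conn := agraph_connected hTne
        acyc := agraph_acyclic T
        t := fun i => (T.subAt i.1).label
        cover := fun v => by
          obtain ⟨p, hp, hv⟩ := rtd_cover hT (Set.mem_univ v)
          exact ⟨⟨p, hp⟩, hv⟩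
        edge := fun e => by
          obtain ⟨p, hp, hv⟩ := rtd_edge hT (Set.mem_univ e)
          exact ⟨⟨p, hp⟩, hv⟩
        sep := by
          haveI : DecidableEq (Addr T) := Classical.decEq _
          intro i j k p hp hj v hv
          obtain ⟨w, hw⟩ := hsepkey i k v hv.1 hv.2
          have hpeq : p = w.bypass :=
            congrArg Subtype.val
              ((agraph_acyclic T).path_unique ⟨p, hp⟩ ⟨w.bypass, w.bypass_isPath⟩)
          exact hw j (w.support_bypass_subset (hpeq ▸ hj)) },
      ⟨[], by simpa using hTne⟩, ?_, ?_⟩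
    · exact hT.2.2.1
    · show (⨆ i : Addr T, ((T.subAt i.1).label).ncard) = T.width
      haveI : Nonempty (Addr T) := ⟨⟨[], by simpa using hTne⟩⟩
      apply le_antisymm
      · exact ciSup_le fun i => width_le_iff.mp le_rfl i.1 i.2
      · refine width_le_iff.mpr fun p hp => ?_
        haveI : Finite (Addr T) := inferInstance
        have hb : BddAbove (Set.range fun i : Addr T => ((T.subAt i.1).label).ncard) :=
          Set.Finite.bddAbove (Set.finite_range _)
        exact le_ciSup hb (⟨p, hp⟩ : Addr T)


end MWidth
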